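/- Let 0 < λ ≤ 1/2, and let κ, a₁, a₂ > 0 with κ·a₁ ≥ 4λ². Let f̄ ≥ 0 and let k ≥ (2/(κ·a₁))·(f̄ + a₂). Let l ≥ 1 and let μ₁,…,μ_l ∈ [−λ, λ] and Δt₁,…,Δt_l ∈ (0, 1] satisfy Σ_{i=1}^{l} Δt_i ≥ k and Π_{i=1}^{l} (1 + μ_i·Δt_i) ≤ e^{f̄}. Then Σ_{i=1}^{l} (−μ_i + κ·a₁)·Δt_i ≥ a₂. -/

import Mathlib

/-- For `x ≥ -1/2`, `log (1+x) ≥ x - 2x²`. -/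
lemma stmt17_log_lb (x : ℝ) (hx : -(1/2) ≤ x) : x - 2*x^2 ≤ Real.log (1+x) := by
  have h1 : (0:ℝ) < 1 + x := by linarith
  have h2 : Real.log (1+x)⁻¹ ≤ (1+x)⁻¹ - 1 :=
    Real.log_le_sub_one_of_pos (by positivity)
  rw [Real.log_inv] at h2
  have hinv : (1+x) * (1+x)⁻¹ = 1 := mul_inv_cancel₀ (ne_of_gt h1)
  have hinvpos : (0:ℝ) < (1+x)⁻¹ := by positivity
  have h6 : 0 ≤ x^2 * (1+2*x) := mul_nonneg (sq_nonneg x) (by linarith)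
  have h4 : x - 2*x^2 ≤ 1 - (1+x)⁻¹ := by nlinarith
  linarith

/-- Core claim of Lemma 9 (a too-empty warehouse refills): if the price
updates over a span of at least `k ≥ (2/(κa₁))(f̄ + a₂)` days multiply the
price by factors `1 + μᵢΔtᵢ` with `|μᵢ| ≤ λ`, `0 < Δtᵢ ≤ 1`, total factor at
most `e^{f̄}`, and `κa₁ ≥ 4λ²`, then `Σ (−μᵢ + κa₁)Δtᵢ ≥ a₂`. -/
theorem stmt17 (lam κ a₁ a₂ fbar k : ℝ)
    (hlam0 : 0 < lam) (hlam1 : lam ≤ 1 / 2)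
    (hκ : 0 < κ) (ha₁ : 0 < a₁) (ha₂ : 0 < a₂)
    (hκa₁ : 4 * lam ^ 2 ≤ κ * a₁)
    (hfbar : 0 ≤ fbar)
    (hk : 2 / (κ * a₁) * (fbar + a₂) ≤ k)
    (l : ℕ) (hl : 1 ≤ l)
    (μ Δt : ℕ → ℝ)
    (hμ : ∀ i ∈ Finset.range l, -lam ≤ μ i ∧ μ i ≤ lam)
    (hΔt : ∀ i ∈ Finset.range l, 0 < Δt i ∧ Δt i ≤ 1)
    (hsum : k ≤ ∑ i ∈ Finset.range l, Δt i)
    (hprod : ∏ i ∈ Finset.range l, (1 + μ i * Δt i) ≤ Real.exp fbar) :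
    a₂ ≤ ∑ i ∈ Finset.range l, (-μ i + κ * a₁) * Δt i := by
  have hka : 0 < κ * a₁ := mul_pos hκ ha₁
  have hpos : ∀ i ∈ Finset.range l, 0 < 1 + μ i * Δt i := by
    intro i hi
    obtain ⟨hμ1, hμ2⟩ := hμ i hi
    obtain ⟨ht1, ht2⟩ := hΔt i hi
    nlinarith
  have hbound : ∀ i ∈ Finset.range l,
      μ i * Δt i - 2 * lam^2 * Δt i ≤ Real.log (1 + μ i * Δt i) := by
    intro i hi
    obtain ⟨hμ1, hμ2⟩ := hμ i hi
    obtain ⟨ht1, ht2⟩ := hΔt i hi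
    have hx : -(1/2) ≤ μ i * Δt i := by nlinarith
    have hlog := stmt17_log_lb _ hx
    have h1 : (μ i)^2 ≤ lam^2 := sq_le_sq' hμ1 hμ2
    have h2 : (Δt i)^2 ≤ Δt i := by nlinarith
    have hsq : (μ i * Δt i)^2 ≤ lam^2 * Δt i := by
      nlinarith [mul_le_mul h1 h2 (sq_nonneg (Δt i)) (sq_nonneg lam)]
    nlinarith
  have hlogsum : ∑ i ∈ Finset.range l, Real.log (1 + μ i * Δt i) ≤ fbar := by
    rw [← Real.log_prod (fun i hi => (hpos i hi).ne')]
    calc Real.log (∏ i ∈ Finset.range l, (1 + μ i * Δt i))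
        ≤ Real.log (Real.exp fbar) :=
          Real.log_le_log (Finset.prod_pos hpos) hprod
      _ = fbar := Real.log_exp fbar
  have hsum1 : ∑ i ∈ Finset.range l, (μ i * Δt i - 2 * lam^2 * Δt i) ≤ fbar :=
    le_trans (Finset.sum_le_sum hbound) hlogsum
  have hexp : (∑ i ∈ Finset.range l, μ i * Δt i)
      - 2 * lam^2 * (∑ i ∈ Finset.range l, Δt i) ≤ fbar := by
    rw [Finset.mul_sum, ← Finset.sum_sub_distrib]
    exact hsum1
  have htarget : ∑ i ∈ Finset.range l, (-μ i + κ * a₁) * Δt i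
      = -(∑ i ∈ Finset.range l, μ i * Δt i)
        + κ * a₁ * (∑ i ∈ Finset.range l, Δt i) := by
    rw [Finset.mul_sum, ← Finset.sum_neg_distrib, ← Finset.sum_add_distrib]
    apply Finset.sum_congr rfl
    intro i _
    ring
  have hk0 : 0 ≤ k := le_trans (by positivity) hk
  have hS0 : 0 ≤ ∑ i ∈ Finset.range l, Δt i := le_trans hk0 hsum
  have hk' : 2 * (fbar + a₂) ≤ k * (κ * a₁) := by
    rw [div_mul_eq_mul_div] at hk
    exact (div_le_iff₀ hka).mp hk
  rw [htarget]
  nlinarith [mul_nonneg (sub_nonneg.mpr hκa₁) hS0,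
    mul_nonneg hka.le (sub_nonneg.mpr hsum)]
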